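/- Let (ũ_k)_{k≥0} be the Lehmer sequence associated to ζ and η. Then for all integers m, k ≥ 1: m divides ũ_k if and only if gcd(m, c₂) = 1 and ρ(m) divides k. -/

import Mathlib

set_option maxHeartbeats 1600000 in
/-- Let `(ũ_k)` be the Lehmer sequence associated to `ζ` and `η`.
Then for all integers `m, k ≥ 1`: `m ∣ ũ_k` if and only if `gcd(m, c₂) = 1` and
`ρ(m) ∣ k`, where `ρ` is the rank of appearance. -/
theorem stmt_4
    (ζ η : ℂ) (c₁ c₂ : ℤ)
    (hc₁ : (c₁ : ℂ) = (ζ + η) ^ 2) (hc₂ : (c₂ : ℂ) = ζ * η)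
    (hc₁0 : c₁ ≠ 0) (hc₂0 : c₂ ≠ 0) (hcop : IsCoprime c₁ c₂)
    (habs : ‖η‖ ≤ ‖ζ‖)
    (hru : ∀ k : ℕ, 0 < k → (ζ / η) ^ k ≠ 1)
    (u : ℕ → ℤ)
    (hu : ∀ k : ℕ, (u k : ℂ) =
      if Odd k then (ζ ^ k - η ^ k) / (ζ - η) else (ζ ^ k - η ^ k) / (ζ ^ 2 - η ^ 2))
    (ρ : ℕ → ℕ)
    (hρ : ∀ m : ℕ, 0 < m → Int.gcd (m : ℤ) c₂ = 1 →
      0 < ρ m ∧ (m : ℤ) ∣ u (ρ m) ∧ ∀ k : ℕ, 0 < k → (m : ℤ) ∣ u k → ρ m ≤ k) :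
    ∀ m k : ℕ, 0 < m → 0 < k →
      ((m : ℤ) ∣ u k ↔ Int.gcd (m : ℤ) c₂ = 1 ∧ ρ m ∣ k) := by
  -- basic nonvanishing facts
  have hη : η ≠ 0 := by
    intro h
    apply hc₂0
    have : (c₂ : ℂ) = 0 := by rw [hc₂, h, mul_zero]
    exact_mod_cast this
  have hζη : ζ ≠ η := by
    intro h
    exact hru 1 one_pos (by rw [pow_one, h, div_self hη])
  have hsub : ζ - η ≠ 0 := sub_ne_zero.mpr hζη
  have haddne : ζ + η ≠ 0 := by
    intro h
    apply hc₁0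
    have : (c₁ : ℂ) = 0 := by rw [hc₁, h]; ring
    exact_mod_cast this
  have hsq : ζ ^ 2 - η ^ 2 ≠ 0 := by
    have : ζ ^ 2 - η ^ 2 = (ζ - η) * (ζ + η) := by ring
    rw [this]
    exact mul_ne_zero hsub haddne
  have hcast : ∀ {a b : ℤ}, (a : ℂ) = (b : ℂ) → a = b := fun h => by exact_mod_cast h
  have hu0 : u 0 = 0 := hcast (by rw [hu 0]; norm_num)
  have hu1 : u 1 = 1 := by
    apply hcast
    rw [hu 1]
    simp [div_self hsub]
  -- recurrence
  have hrec : ∀ n : ℕ, u (n + 2) = (if Even n then 1 else c₁) * u (n + 1) - c₂ * u n := by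
    intro n
    rcases Nat.even_or_odd n with hn | hn
    · have h1 : ¬ Odd n := by rw [Nat.odd_iff]; rw [Nat.even_iff] at hn; omega
      have h2 : Odd (n + 1) := by rw [Nat.odd_iff]; rw [Nat.even_iff] at hn; omega
      have h3 : ¬ Odd (n + 2) := by rw [Nat.odd_iff]; rw [Nat.even_iff] at hn; omega
      rw [if_pos hn]
      apply hcast
      push_cast
      rw [hu, hu, hu, if_neg h3, if_pos h2, if_neg h1, hc₂]
      field_simp
      ring
    · have h1 : Odd n := hn
      have h2 : ¬ Odd (n + 1) := by rw [Nat.odd_iff] at h1 ⊢; omega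
      have h3 : Odd (n + 2) := by rw [Nat.odd_iff] at h1 ⊢; omega
      have h4 : ¬ Even n := by rw [Nat.even_iff]; rw [Nat.odd_iff] at h1; omega
      rw [if_neg h4]
      apply hcast
      push_cast
      rw [hu, hu, hu, if_pos h3, if_neg h2, if_pos h1, hc₁, hc₂]
      field_simp
      ring
  have hu2 : u 2 = 1 := by
    have := hrec 0
    simp [hu0, hu1] at this
    simpa using this
  -- key addition identity
  have hkey : ∀ a b : ℕ, u (a + 1 + b) =
      (if Even (a + 1) ∧ Odd b then c₁ else 1) * (u (a + 1) * u (b + 1)) -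
      (if Odd (a + 1) ∧ Even b then c₁ else 1) * (c₂ * (u a * u b)) := by
    intro a b
    rcases Nat.even_or_odd a with ⟨x, rfl⟩ | ⟨x, rfl⟩ <;>
      rcases Nat.even_or_odd b with ⟨y, rfl⟩ | ⟨y, rfl⟩
    · rw [if_neg (by rintro ⟨h, -⟩; rw [Nat.even_iff] at h; omega),
        if_pos ⟨by rw [Nat.odd_iff]; omega, by rw [Nat.even_iff]; omega⟩]
      apply hcast
      push_cast
      rw [hu, hu, hu, hu, hu,
        if_pos (by rw [Nat.odd_iff]; omega), if_pos (by rw [Nat.odd_iff]; omega),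
        if_pos (by rw [Nat.odd_iff]; omega), if_neg (by rw [Nat.odd_iff]; omega),
        if_neg (by rw [Nat.odd_iff]; omega), hc₁, hc₂]
      field_simp
      ring
    · rw [if_neg (by rintro ⟨h, -⟩; rw [Nat.even_iff] at h; omega),
        if_neg (by rintro ⟨-, h⟩; rw [Nat.even_iff] at h; omega)]
      apply hcast
      push_cast
      rw [hu, hu, hu, hu, hu,
        if_neg (by rw [Nat.odd_iff]; omega), if_pos (by rw [Nat.odd_iff]; omega),
        if_neg (by rw [Nat.odd_iff]; omega), if_neg (by rw [Nat.odd_iff]; omega),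
        if_pos (by rw [Nat.odd_iff]; omega), hc₂]
      field_simp
      ring
    · rw [if_neg (by rintro ⟨-, h⟩; rw [Nat.odd_iff] at h; omega),
        if_neg (by rintro ⟨h, -⟩; rw [Nat.odd_iff] at h; omega)]
      apply hcast
      push_cast
      rw [hu, hu, hu, hu, hu,
        if_neg (by rw [Nat.odd_iff]; omega), if_neg (by rw [Nat.odd_iff]; omega),
        if_pos (by rw [Nat.odd_iff]; omega), if_pos (by rw [Nat.odd_iff]; omega),
        if_neg (by rw [Nat.odd_iff]; omega), hc₂]
      field_simp
      ring
    · rw [if_pos ⟨by rw [Nat.even_iff]; omega, by rw [Nat.odd_iff]; omega⟩,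
        if_neg (by rintro ⟨h, -⟩; rw [Nat.odd_iff] at h; omega)]
      apply hcast
      push_cast
      rw [hu, hu, hu, hu, hu,
        if_pos (by rw [Nat.odd_iff]; omega), if_neg (by rw [Nat.odd_iff]; omega),
        if_neg (by rw [Nat.odd_iff]; omega), if_pos (by rw [Nat.odd_iff]; omega),
        if_pos (by rw [Nat.odd_iff]; omega), hc₁, hc₂]
      field_simp
      ring
  -- every u (n+1) is coprime to c₂
  have hAcop : ∀ n : ℕ, IsCoprime (if Even n then (1 : ℤ) else c₁) c₂ := by
    intro n
    split
    · exact isCoprime_one_left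
    · exact hcop
  have hcop2 : ∀ n : ℕ, IsCoprime (u (n + 1)) c₂ := by
    have main : ∀ n : ℕ, IsCoprime (u (n + 1)) c₂ ∧ IsCoprime (u (n + 2)) c₂ := by
      intro n
      induction n with
      | zero =>
        constructor
        · rw [hu1]; exact isCoprime_one_left
        · rw [hu2]; exact isCoprime_one_left
      | succ k ih =>
        refine ⟨ih.2, ?_⟩
        have heq : u (k + 1 + 2) =
            (if Even (k + 1) then (1 : ℤ) else c₁) * u (k + 2) + c₂ * (-(u (k + 1))) := by
          rw [hrec (k + 1)]; ring
        rw [heq]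
        exact ((hAcop (k + 1)).mul_left ih.2).add_mul_left_left _
    exact fun n => (main n).1
  -- consecutive terms are coprime
  have hcons : ∀ n : ℕ, IsCoprime (u (n + 1)) (u n) := by
    intro n
    induction n with
    | zero => rw [hu1]; exact isCoprime_one_left
    | succ k ih =>
      have heq : u (k + 2) =
          c₂ * (-(u k)) + u (k + 1) * (if Even k then (1 : ℤ) else c₁) := by
        rw [hrec k]; ring
      rw [heq]
      exact (((hcop2 k).symm.mul_left ih.symm.neg_left).add_mul_left_left _)
  -- odd-indexed terms are coprime to c₁
  have hodd1 : ∀ k : ℕ, IsCoprime (u (2 * k + 1)) c₁ := by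
    intro k
    induction k with
    | zero => rw [hu1]; exact isCoprime_one_left
    | succ j ih =>
      have hidx : 2 * (j + 1) + 1 = 2 * j + 1 + 2 := by ring
      rw [hidx]
      have hne : ¬ Even (2 * j + 1) := by rw [Nat.even_iff]; omega
      have heq : u (2 * j + 1 + 2) =
          -(c₂ * u (2 * j + 1)) + c₁ * u (2 * j + 2) := by
        rw [hrec (2 * j + 1), if_neg hne]; ring
      rw [heq]
      exact ((hcop.symm.mul_left ih).neg_left).add_mul_left_left _
  have hoddgen : ∀ n : ℕ, Odd n → IsCoprime (u n) c₁ := by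
    rintro n ⟨k, rfl⟩
    exact hodd1 k
  -- addition of divisibility
  have hadddvd : ∀ (M : ℤ) (a b : ℕ), M ∣ u (a + 1) → M ∣ u b → M ∣ u (a + 1 + b) := by
    intro M a b h1 h2
    rw [hkey a b]
    exact dvd_sub ((h1.mul_right _).mul_left _) (((h2.mul_left _).mul_left _).mul_left _)
  -- multiples of the rank
  have hmul : ∀ (M : ℤ) (r : ℕ), 0 < r → M ∣ u r → ∀ j : ℕ, M ∣ u (j * r) := by
    intro M r hr h j
    induction j with
    | zero => simpa [hu0] using (dvd_refl (0 : ℤ))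
    | succ j ih =>
      have hidx : (j + 1) * r = (r - 1) + 1 + j * r := by
        rw [Nat.sub_add_cancel hr]; ring
      rw [hidx]
      refine hadddvd M (r - 1) (j * r) ?_ ih
      rwa [Nat.sub_add_cancel hr]
  -- main statement
  intro m k hm hk
  constructor
  · intro hdvd
    have hk1 : k = (k - 1) + 1 := by omega
    have hcopm : IsCoprime ((m : ℤ)) c₂ := by
      refine (hcop2 (k - 1)).of_isCoprime_of_dvd_left ?_
      rwa [← hk1]
    have hgcd : Int.gcd (m : ℤ) c₂ = 1 := Int.isCoprime_iff_gcd_eq_one.mp hcopm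
    refine ⟨hgcd, ?_⟩
    obtain ⟨hρpos, hρdvd, hρmin⟩ := hρ m hm hgcd
    set r := ρ m with hr
    by_contra hndvd
    have ht : k % r ≠ 0 := fun h => hndvd (Nat.dvd_of_mod_eq_zero h)
    set t := k % r with htdef
    set q := k / r with hqdef
    have hkqt : q * r + t = k := by rw [hqdef, htdef, Nat.mul_comm]; exact Nat.div_add_mod k r
    have htlt : t < r := Nat.mod_lt k hρpos
    have htpos : 0 < t := Nat.pos_of_ne_zero ht
    have hqr : (m : ℤ) ∣ u (q * r) := hmul m r hρpos hρdvd q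
    rcases Nat.eq_zero_or_pos q with hq0 | hqpos
    · -- then k = t < r, contradicting minimality
      have : k = t := by rw [hq0, Nat.zero_mul, Nat.zero_add] at hkqt; omega
      have := hρmin k hk hdvd
      omega
    · have hqrpos : 0 < q * r := Nat.mul_pos hqpos hρpos
      have hidx : q * r - 1 + 1 = q * r := Nat.sub_add_cancel hqrpos
      have hkeyqt := hkey (q * r - 1) t
      rw [hidx] at hkeyqt
      have hkidx : q * r + t = k := hkqt
      rw [hkidx] at hkeyqt
      -- m divides the B-term
      have hdvdB : (m : ℤ) ∣
          (if Odd (q * r) ∧ Even t then c₁ else 1) * (c₂ * (u (q * r - 1) * u t)) := by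
        have : (if Odd (q * r) ∧ Even t then c₁ else 1) * (c₂ * (u (q * r - 1) * u t)) =
            (if Even (q * r) ∧ Odd t then c₁ else 1) * (u (q * r) * u (t + 1)) - u k := by
          rw [hkeyqt]; ring
        rw [this]
        exact dvd_sub ((hqr.mul_right _).mul_left _) hdvd
      -- coprimality facts
      have hcB : IsCoprime ((m : ℤ)) (if Odd (q * r) ∧ Even t then c₁ else 1) := by
        split
        · next h =>
          exact ((hoddgen (q * r) h.1).of_isCoprime_of_dvd_left hqr).symm.symm |>.symm.symm
            |>.symm.symm
        · exact isCoprime_one_right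
      have hcprev : IsCoprime ((m : ℤ)) (u (q * r - 1)) := by
        have h1 : IsCoprime (u (q * r)) (u (q * r - 1)) := by
          have := hcons (q * r - 1)
          rwa [hidx] at this
        exact (h1.of_isCoprime_of_dvd_left hqr)
      have hdvdt : (m : ℤ) ∣ u t := by
        have s1 := hcB.dvd_of_dvd_mul_left hdvdB
        have s2 := hcopm.dvd_of_dvd_mul_left s1
        exact hcprev.dvd_of_dvd_mul_left s2
      have := hρmin t htpos hdvdt
      omega
  · rintro ⟨hgcd, hrdvd⟩
    obtain ⟨hρpos, hρdvd, -⟩ := hρ m hm hgcd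
    obtain ⟨j, rfl⟩ := hrdvd
    rw [Nat.mul_comm]
    exact hmul m (ρ m) hρpos hρdvd j
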